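/- Consider the scalar system x'(t) = a·x(t) + b·w(t) with constants a < 0, b ≠ 0, and |w(t)| ≤ 1 for all t. For any constant α with 0 < α < −2a, every solution with x(t₀)² ≤ p satisfies x(t)² ≤ p for all t ≥ t₀, where p = b²/(α(−2a − α)) (equivalently p solves 2ap + αp + b²/α = 0). -/

import Mathlib

theorem stmt_6 (a b α p : ℝ) (ha : a < 0) (hb : b ≠ 0) (hα : 0 < α) (hα2 : α < -2 * a)
    (hp : p = b ^ 2 / (α * (-2 * a - α)))
    (x w : ℝ → ℝ) (hw : ∀ t, |w t| ≤ 1)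
    (hx : ∀ t, HasDerivAt x (a * x t + b * w t) t)
    (t₀ : ℝ) (h0 : x t₀ ^ 2 ≤ p) :
    ∀ t ≥ t₀, x t ^ 2 ≤ p := by
  intro t ht
  have hden : 0 < α * (-2 * a - α) := mul_pos hα (by linarith)
  have hα' : α ≠ 0 := ne_of_gt hα
  have hd' : -2 * a - α ≠ 0 := by linarith
  have hkey : (2 * a + α) * p + b ^ 2 / α = 0 := by
    have h7 : α * (-2 * a - α) ≠ 0 := ne_of_gt hden
    rw [hp, ← mul_div_assoc, div_add_div _ _ h7 hα', div_eq_iff (mul_ne_zero h7 hα')]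
    ring
  have main : ∀ ε > 0, x t ^ 2 ≤ p + ε * Real.exp (t - t₀) := by
    intro ε hε
    have H : ∀ ⦃s⦄, s ∈ Set.Icc t₀ t →
        x s ^ 2 ≤ p + ε * Real.exp (s - t₀) := by
      apply image_le_of_deriv_right_lt_deriv_boundary
        (f := fun s => x s ^ 2) (f' := fun s => 2 * x s * (a * x s + b * w s))
        (B := fun s => p + ε * Real.exp (s - t₀)) (B' := fun s => ε * Real.exp (s - t₀))
      · exact fun s _ => (((hx s).pow 2).continuousAt.continuousWithinAt.congr
          (fun y _ => by rfl) (by rfl))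
      · intro s _
        have := (hx s).pow 2
        simpa [Pi.pow_def, mul_comm, mul_assoc, mul_left_comm] using this.hasDerivWithinAt
      · simpa using h0.trans_lt (by nlinarith [Real.exp_pos (0:ℝ)]) |>.le
      · intro s
        have : HasDerivAt (fun s => p + ε * Real.exp (s - t₀)) (ε * Real.exp (s - t₀)) s := by
          have h1 : HasDerivAt (fun s : ℝ => s - t₀) 1 s := (hasDerivAt_id s).sub_const t₀
          simpa using ((Real.hasDerivAt_exp (s - t₀)).comp s h1).const_mul ε |>.const_add p
        exact this
      · intro s _ hfB
        have hxs := hx s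
        have hws := hw s
        have habs : 2 * (b * w s) * x s ≤ α * x s ^ 2 + b ^ 2 / α := by
          have h1 : 2 * (b * w s) * x s ≤ 2 * |b| * |x s| := by
            calc 2 * (b * w s) * x s ≤ |2 * (b * w s) * x s| := le_abs_self _
            _ = 2 * (|b| * |w s|) * |x s| := by
                rw [abs_mul, abs_mul, abs_mul]; simp [abs_of_nonneg]
            _ ≤ 2 * (|b| * 1) * |x s| := by
                nlinarith [mul_nonneg (mul_nonneg (abs_nonneg b) (abs_nonneg (x s)))
                  (sub_nonneg.2 hws)]
            _ = 2 * |b| * |x s| := by ring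
          have h2 : 2 * |b| * |x s| ≤ α * x s ^ 2 + b ^ 2 / α := by
            have h3 : 0 ≤ α ^ 2 * x s ^ 2 - 2 * α * |b| * |x s| + b ^ 2 := by
              calc (0:ℝ) ≤ (α * |x s| - |b|) ^ 2 := sq_nonneg _
              _ = α ^ 2 * |x s| ^ 2 - 2 * α * |b| * |x s| + |b| ^ 2 := by ring
              _ = α ^ 2 * x s ^ 2 - 2 * α * |b| * |x s| + b ^ 2 := by
                  rw [sq_abs, sq_abs]
            have h6 : b ^ 2 / α * α = b ^ 2 := div_mul_cancel₀ _ (ne_of_gt hα)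
            nlinarith [h3, h6, hα]
          linarith
        have hexp : 0 < Real.exp (s - t₀) := Real.exp_pos _
        have hδ : (2 * a + α) < 0 := by linarith
        -- f' s = 2a x² + 2bwx ≤ (2a+α)x² + b²/α = (2a+α)(B s) + b²/α
        have : 2 * x s * (a * x s + b * w s) ≤ (2 * a + α) * x s ^ 2 + b ^ 2 / α := by
          nlinarith [habs]
        calc 2 * x s * (a * x s + b * w s)
            ≤ (2 * a + α) * (x s ^ 2) + b ^ 2 / α := this
          _ = (2 * a + α) * (p + ε * Real.exp (s - t₀)) + b ^ 2 / α := by rw [hfB]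
          _ = (2 * a + α) * (ε * Real.exp (s - t₀)) := by linarith [hkey]
          _ < ε * Real.exp (s - t₀) := by nlinarith [mul_pos hε hexp, hδ]
    exact H ⟨ht, le_refl t⟩
  have hC : 0 < Real.exp (t - t₀) := Real.exp_pos _
  by_contra hlt
  push_neg at hlt
  have := main ((x t ^ 2 - p) / (2 * Real.exp (t - t₀)))
    (div_pos (by linarith) (by positivity))
  rw [div_mul_eq_mul_div, mul_div_mul_right _ _ (ne_of_gt hC)] at this
  linarith
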